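/- arXiv:2309.16582 — 5 statements merged into one kernel-verified Lean document; each statement's English description precedes it below -/
import Mathlib

section
/- Let V, W1, W2, W3 be finite-dimensional complex vector spaces. Define W on End(V)^3 × ∏_{k=1}^{3} Hom(W_k,V) × ∏_{k=1}^{3} Hom(V,W_k) by W(B1,B2,B3,I1,I2,I3,J1,J2,J3) = tr(B1∘(B2∘B3 − B3∘B2)) + Σ_{k=1}^{3} tr(B_k∘I_k∘J_k). Then the point (B1,B2,B3,I1,I2,I3,J1,J2,J3) is a critical point of W if and only if B2∘B3 − B3∘B2 + I1∘J1 = 0, B3∘B1 − B1∘B3 + I2∘J2 = 0, B1∘B2 − B2∘B1 + I3∘J3 = 0, and J_k∘B_k = 0 and B_k∘I_k = 0 for each k = 1,2,3. -/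
open LinearMap

private lemma trace_smulRight_aux {N : Type*} [AddCommGroup N] [Module ℂ N]
    [FiniteDimensional ℂ N] (ψ : Module.Dual ℂ N) (n : N) :
    LinearMap.trace ℂ N (ψ.smulRight n) = ψ n := by
  have h : ψ.smulRight n = dualTensorHom ℂ N N (ψ ⊗ₜ n) := by ext x; simp
  rw [h, trace_eq_contract_apply]; simp

private lemma tr_nd {M N : Type*} [AddCommGroup M] [Module ℂ M] [FiniteDimensional ℂ M]
    [AddCommGroup N] [Module ℂ N] [FiniteDimensional ℂ N] (f : M →ₗ[ℂ] N)
    (h : ∀ g : N →ₗ[ℂ] M, LinearMap.trace ℂ N (f ∘ₗ g) = 0) : f = 0 := by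
  ext m
  show f m = 0
  rw [← Module.forall_dual_apply_eq_zero_iff ℂ (f m)]
  intro ψ
  have h2 := h (ψ.smulRight m)
  have h3 : f ∘ₗ ψ.smulRight m = ψ.smulRight (f m) := by ext x; simp
  rwa [h3, trace_smulRight_aux] at h2

private lemma deriv_of_cubic {f : ℂ → ℂ} {a b c d : ℂ}
    (h : ∀ t, f t = a + b * t + c * t ^ 2 + d * t ^ 3) : deriv f 0 = b := by
  have hf : f = fun t => a + b * t + c * t ^ 2 + d * t ^ 3 := funext h
  have hd : HasDerivAt (fun t : ℂ => a + b * t + c * t ^ 2 + d * t ^ 3)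
      (0 + b * 1 + c * ((2 : ℕ) * (0 : ℂ) ^ 1) + d * ((3 : ℕ) * (0 : ℂ) ^ 2)) 0 := by
    exact (((hasDerivAt_const (0 : ℂ) a).add ((hasDerivAt_id' (0 : ℂ)).const_mul b)).add
      ((hasDerivAt_pow 2 (0 : ℂ)).const_mul c)).add ((hasDerivAt_pow 3 (0 : ℂ)).const_mul d)
  rw [hf]
  simpa using hd.deriv

private lemma cyc3 {V : Type*} [AddCommGroup V] [Module ℂ V] [FiniteDimensional ℂ V]
    (X Y Z : Module.End ℂ V) :
    LinearMap.trace ℂ V (X ∘ₗ Y ∘ₗ Z) = LinearMap.trace ℂ V (Y ∘ₗ Z ∘ₗ X) := by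
  rw [trace_comp_comm' (Y ∘ₗ Z) X, LinearMap.comp_assoc]

/-- Nekrasov's spiked-instanton quiver with potential
`W = tr(B₁[B₂,B₃]) + Σₖ tr(Bₖ∘Iₖ∘Jₖ)`: a point is critical (every directional derivative
vanishes) iff `[B₂,B₃] + I₁∘J₁ = 0`, `[B₃,B₁] + I₂∘J₂ = 0`, `[B₁,B₂] + I₃∘J₃ = 0`, and
`Jₖ∘Bₖ = 0`, `Bₖ∘Iₖ = 0` for `k = 1,2,3`. -/
theorem critical_points_of_spiked_instanton_potential
    (V W₁ W₂ W₃ : Type*) [AddCommGroup V] [Module ℂ V] [FiniteDimensional ℂ V]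
    [AddCommGroup W₁] [Module ℂ W₁] [FiniteDimensional ℂ W₁]
    [AddCommGroup W₂] [Module ℂ W₂] [FiniteDimensional ℂ W₂]
    [AddCommGroup W₃] [Module ℂ W₃] [FiniteDimensional ℂ W₃]
    (B₁ B₂ B₃ : Module.End ℂ V)
    (I₁ : W₁ →ₗ[ℂ] V) (I₂ : W₂ →ₗ[ℂ] V) (I₃ : W₃ →ₗ[ℂ] V)
    (J₁ : V →ₗ[ℂ] W₁) (J₂ : V →ₗ[ℂ] W₂) (J₃ : V →ₗ[ℂ] W₃) :
    (∀ (C₁ C₂ C₃ : Module.End ℂ V)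
        (K₁ : W₁ →ₗ[ℂ] V) (K₂ : W₂ →ₗ[ℂ] V) (K₃ : W₃ →ₗ[ℂ] V)
        (L₁ : V →ₗ[ℂ] W₁) (L₂ : V →ₗ[ℂ] W₂) (L₃ : V →ₗ[ℂ] W₃),
        deriv (fun t : ℂ =>
          LinearMap.trace ℂ V
            ((B₁ + t • C₁) ∘ₗ
              ((B₂ + t • C₂) ∘ₗ (B₃ + t • C₃) - (B₃ + t • C₃) ∘ₗ (B₂ + t • C₂)))
          + LinearMap.trace ℂ V (((B₁ + t • C₁) ∘ₗ (I₁ + t • K₁)) ∘ₗ (J₁ + t • L₁))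
          + LinearMap.trace ℂ V (((B₂ + t • C₂) ∘ₗ (I₂ + t • K₂)) ∘ₗ (J₂ + t • L₂))
          + LinearMap.trace ℂ V (((B₃ + t • C₃) ∘ₗ (I₃ + t • K₃)) ∘ₗ (J₃ + t • L₃))) 0 = 0)
      ↔ (B₂ ∘ₗ B₃ - B₃ ∘ₗ B₂ + I₁ ∘ₗ J₁ = 0 ∧
         B₃ ∘ₗ B₁ - B₁ ∘ₗ B₃ + I₂ ∘ₗ J₂ = 0 ∧
         B₁ ∘ₗ B₂ - B₂ ∘ₗ B₁ + I₃ ∘ₗ J₃ = 0 ∧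
         J₁ ∘ₗ B₁ = 0 ∧ J₂ ∘ₗ B₂ = 0 ∧ J₃ ∘ₗ B₃ = 0 ∧
         B₁ ∘ₗ I₁ = 0 ∧ B₂ ∘ₗ I₂ = 0 ∧ B₃ ∘ₗ I₃ = 0) := by
  have key : ∀ (C₁ C₂ C₃ : Module.End ℂ V)
      (K₁ : W₁ →ₗ[ℂ] V) (K₂ : W₂ →ₗ[ℂ] V) (K₃ : W₃ →ₗ[ℂ] V)
      (L₁ : V →ₗ[ℂ] W₁) (L₂ : V →ₗ[ℂ] W₂) (L₃ : V →ₗ[ℂ] W₃),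
      deriv (fun t : ℂ =>
          LinearMap.trace ℂ V
            ((B₁ + t • C₁) ∘ₗ
              ((B₂ + t • C₂) ∘ₗ (B₃ + t • C₃) - (B₃ + t • C₃) ∘ₗ (B₂ + t • C₂)))
          + LinearMap.trace ℂ V (((B₁ + t • C₁) ∘ₗ (I₁ + t • K₁)) ∘ₗ (J₁ + t • L₁))
          + LinearMap.trace ℂ V (((B₂ + t • C₂) ∘ₗ (I₂ + t • K₂)) ∘ₗ (J₂ + t • L₂))
          + LinearMap.trace ℂ V (((B₃ + t • C₃) ∘ₗ (I₃ + t • K₃)) ∘ₗ (J₃ + t • L₃))) 0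
        = LinearMap.trace ℂ V (C₁ ∘ₗ (B₂ ∘ₗ B₃ - B₃ ∘ₗ B₂ + I₁ ∘ₗ J₁))
        + LinearMap.trace ℂ V (C₂ ∘ₗ (B₃ ∘ₗ B₁ - B₁ ∘ₗ B₃ + I₂ ∘ₗ J₂))
        + LinearMap.trace ℂ V (C₃ ∘ₗ (B₁ ∘ₗ B₂ - B₂ ∘ₗ B₁ + I₃ ∘ₗ J₃))
        + LinearMap.trace ℂ W₁ ((J₁ ∘ₗ B₁) ∘ₗ K₁)
        + LinearMap.trace ℂ W₂ ((J₂ ∘ₗ B₂) ∘ₗ K₂)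
        + LinearMap.trace ℂ W₃ ((J₃ ∘ₗ B₃) ∘ₗ K₃)
        + LinearMap.trace ℂ V ((B₁ ∘ₗ I₁) ∘ₗ L₁)
        + LinearMap.trace ℂ V ((B₂ ∘ₗ I₂) ∘ₗ L₂)
        + LinearMap.trace ℂ V ((B₃ ∘ₗ I₃) ∘ₗ L₃) := by
    intro C₁ C₂ C₃ K₁ K₂ K₃ L₁ L₂ L₃
    have hb : deriv (fun t : ℂ =>
          LinearMap.trace ℂ V
            ((B₁ + t • C₁) ∘ₗ
              ((B₂ + t • C₂) ∘ₗ (B₃ + t • C₃) - (B₃ + t • C₃) ∘ₗ (B₂ + t • C₂)))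
          + LinearMap.trace ℂ V (((B₁ + t • C₁) ∘ₗ (I₁ + t • K₁)) ∘ₗ (J₁ + t • L₁))
          + LinearMap.trace ℂ V (((B₂ + t • C₂) ∘ₗ (I₂ + t • K₂)) ∘ₗ (J₂ + t • L₂))
          + LinearMap.trace ℂ V (((B₃ + t • C₃) ∘ₗ (I₃ + t • K₃)) ∘ₗ (J₃ + t • L₃))) 0
        = LinearMap.trace ℂ V (C₁ ∘ₗ B₂ ∘ₗ B₃) - LinearMap.trace ℂ V (C₁ ∘ₗ B₃ ∘ₗ B₂)
        + LinearMap.trace ℂ V (B₁ ∘ₗ C₂ ∘ₗ B₃) - LinearMap.trace ℂ V (B₁ ∘ₗ B₃ ∘ₗ C₂)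
        + LinearMap.trace ℂ V (B₁ ∘ₗ B₂ ∘ₗ C₃) - LinearMap.trace ℂ V (B₁ ∘ₗ C₃ ∘ₗ B₂)
        + LinearMap.trace ℂ V ((C₁ ∘ₗ I₁) ∘ₗ J₁) + LinearMap.trace ℂ V ((B₁ ∘ₗ K₁) ∘ₗ J₁)
        + LinearMap.trace ℂ V ((B₁ ∘ₗ I₁) ∘ₗ L₁)
        + LinearMap.trace ℂ V ((C₂ ∘ₗ I₂) ∘ₗ J₂) + LinearMap.trace ℂ V ((B₂ ∘ₗ K₂) ∘ₗ J₂)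
        + LinearMap.trace ℂ V ((B₂ ∘ₗ I₂) ∘ₗ L₂)
        + LinearMap.trace ℂ V ((C₃ ∘ₗ I₃) ∘ₗ J₃) + LinearMap.trace ℂ V ((B₃ ∘ₗ K₃) ∘ₗ J₃)
        + LinearMap.trace ℂ V ((B₃ ∘ₗ I₃) ∘ₗ L₃) := by
      apply deriv_of_cubic (a :=
          LinearMap.trace ℂ V (B₁ ∘ₗ B₂ ∘ₗ B₃) - LinearMap.trace ℂ V (B₁ ∘ₗ B₃ ∘ₗ B₂)
          + LinearMap.trace ℂ V ((B₁ ∘ₗ I₁) ∘ₗ J₁) + LinearMap.trace ℂ V ((B₂ ∘ₗ I₂) ∘ₗ J₂)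
          + LinearMap.trace ℂ V ((B₃ ∘ₗ I₃) ∘ₗ J₃))
        (c :=
          LinearMap.trace ℂ V (C₁ ∘ₗ C₂ ∘ₗ B₃) + LinearMap.trace ℂ V (C₁ ∘ₗ B₂ ∘ₗ C₃)
          + LinearMap.trace ℂ V (B₁ ∘ₗ C₂ ∘ₗ C₃) - LinearMap.trace ℂ V (C₁ ∘ₗ C₃ ∘ₗ B₂)
          - LinearMap.trace ℂ V (C₁ ∘ₗ B₃ ∘ₗ C₂) - LinearMap.trace ℂ V (B₁ ∘ₗ C₃ ∘ₗ C₂)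
          + LinearMap.trace ℂ V ((C₁ ∘ₗ K₁) ∘ₗ J₁) + LinearMap.trace ℂ V ((C₁ ∘ₗ I₁) ∘ₗ L₁)
          + LinearMap.trace ℂ V ((B₁ ∘ₗ K₁) ∘ₗ L₁)
          + LinearMap.trace ℂ V ((C₂ ∘ₗ K₂) ∘ₗ J₂) + LinearMap.trace ℂ V ((C₂ ∘ₗ I₂) ∘ₗ L₂)
          + LinearMap.trace ℂ V ((B₂ ∘ₗ K₂) ∘ₗ L₂)
          + LinearMap.trace ℂ V ((C₃ ∘ₗ K₃) ∘ₗ J₃) + LinearMap.trace ℂ V ((C₃ ∘ₗ I₃) ∘ₗ L₃)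
          + LinearMap.trace ℂ V ((B₃ ∘ₗ K₃) ∘ₗ L₃))
        (d :=
          LinearMap.trace ℂ V (C₁ ∘ₗ C₂ ∘ₗ C₃) - LinearMap.trace ℂ V (C₁ ∘ₗ C₃ ∘ₗ C₂)
          + LinearMap.trace ℂ V ((C₁ ∘ₗ K₁) ∘ₗ L₁) + LinearMap.trace ℂ V ((C₂ ∘ₗ K₂) ∘ₗ L₂)
          + LinearMap.trace ℂ V ((C₃ ∘ₗ K₃) ∘ₗ L₃))
      intro t
      simp only [LinearMap.add_comp, LinearMap.comp_add, LinearMap.comp_sub,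
        LinearMap.sub_comp, LinearMap.smul_comp, LinearMap.comp_smul, map_add, map_sub,
        map_smul, smul_eq_mul, smul_smul]
      ring
    rw [hb]
    have f1 : LinearMap.trace ℂ V (B₁ ∘ₗ C₂ ∘ₗ B₃) = LinearMap.trace ℂ V (C₂ ∘ₗ B₃ ∘ₗ B₁) :=
      cyc3 B₁ C₂ B₃
    have f2 : LinearMap.trace ℂ V (B₁ ∘ₗ B₃ ∘ₗ C₂) = LinearMap.trace ℂ V (C₂ ∘ₗ B₁ ∘ₗ B₃) :=
      (cyc3 B₁ B₃ C₂).trans (cyc3 B₃ C₂ B₁)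
    have f3 : LinearMap.trace ℂ V (B₁ ∘ₗ B₂ ∘ₗ C₃) = LinearMap.trace ℂ V (C₃ ∘ₗ B₁ ∘ₗ B₂) :=
      (cyc3 B₁ B₂ C₃).trans (cyc3 B₂ C₃ B₁)
    have f4 : LinearMap.trace ℂ V (B₁ ∘ₗ C₃ ∘ₗ B₂) = LinearMap.trace ℂ V (C₃ ∘ₗ B₂ ∘ₗ B₁) :=
      cyc3 B₁ C₃ B₂
    have f5 : LinearMap.trace ℂ V ((C₁ ∘ₗ I₁) ∘ₗ J₁) = LinearMap.trace ℂ V (C₁ ∘ₗ I₁ ∘ₗ J₁) := by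
      rw [LinearMap.comp_assoc]
    have f6 : LinearMap.trace ℂ V ((C₂ ∘ₗ I₂) ∘ₗ J₂) = LinearMap.trace ℂ V (C₂ ∘ₗ I₂ ∘ₗ J₂) := by
      rw [LinearMap.comp_assoc]
    have f7 : LinearMap.trace ℂ V ((C₃ ∘ₗ I₃) ∘ₗ J₃) = LinearMap.trace ℂ V (C₃ ∘ₗ I₃ ∘ₗ J₃) := by
      rw [LinearMap.comp_assoc]
    have g1 : LinearMap.trace ℂ V ((B₁ ∘ₗ K₁) ∘ₗ J₁)
        = LinearMap.trace ℂ W₁ ((J₁ ∘ₗ B₁) ∘ₗ K₁) := by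
      rw [trace_comp_comm' J₁ (B₁ ∘ₗ K₁), ← LinearMap.comp_assoc]
    have g2 : LinearMap.trace ℂ V ((B₂ ∘ₗ K₂) ∘ₗ J₂)
        = LinearMap.trace ℂ W₂ ((J₂ ∘ₗ B₂) ∘ₗ K₂) := by
      rw [trace_comp_comm' J₂ (B₂ ∘ₗ K₂), ← LinearMap.comp_assoc]
    have g3 : LinearMap.trace ℂ V ((B₃ ∘ₗ K₃) ∘ₗ J₃)
        = LinearMap.trace ℂ W₃ ((J₃ ∘ₗ B₃) ∘ₗ K₃) := by
      rw [trace_comp_comm' J₃ (B₃ ∘ₗ K₃), ← LinearMap.comp_assoc]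
    simp only [LinearMap.comp_add, LinearMap.comp_sub, map_add, map_sub]
    linear_combination f1 - f2 + f3 - f4 + f5 + f6 + f7 + g1 + g2 + g3
  constructor
  · intro hc
    have hb : ∀ (C₁ C₂ C₃ : Module.End ℂ V)
        (K₁ : W₁ →ₗ[ℂ] V) (K₂ : W₂ →ₗ[ℂ] V) (K₃ : W₃ →ₗ[ℂ] V)
        (L₁ : V →ₗ[ℂ] W₁) (L₂ : V →ₗ[ℂ] W₂) (L₃ : V →ₗ[ℂ] W₃),
        LinearMap.trace ℂ V (C₁ ∘ₗ (B₂ ∘ₗ B₃ - B₃ ∘ₗ B₂ + I₁ ∘ₗ J₁))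
        + LinearMap.trace ℂ V (C₂ ∘ₗ (B₃ ∘ₗ B₁ - B₁ ∘ₗ B₃ + I₂ ∘ₗ J₂))
        + LinearMap.trace ℂ V (C₃ ∘ₗ (B₁ ∘ₗ B₂ - B₂ ∘ₗ B₁ + I₃ ∘ₗ J₃))
        + LinearMap.trace ℂ W₁ ((J₁ ∘ₗ B₁) ∘ₗ K₁)
        + LinearMap.trace ℂ W₂ ((J₂ ∘ₗ B₂) ∘ₗ K₂)
        + LinearMap.trace ℂ W₃ ((J₃ ∘ₗ B₃) ∘ₗ K₃)
        + LinearMap.trace ℂ V ((B₁ ∘ₗ I₁) ∘ₗ L₁)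
        + LinearMap.trace ℂ V ((B₂ ∘ₗ I₂) ∘ₗ L₂)
        + LinearMap.trace ℂ V ((B₃ ∘ₗ I₃) ∘ₗ L₃) = 0 := by
      intro C₁ C₂ C₃ K₁ K₂ K₃ L₁ L₂ L₃
      exact (key C₁ C₂ C₃ K₁ K₂ K₃ L₁ L₂ L₃).symm.trans (hc C₁ C₂ C₃ K₁ K₂ K₃ L₁ L₂ L₃)
    refine ⟨?_, ?_, ?_, ?_, ?_, ?_, ?_, ?_, ?_⟩
    · apply tr_nd
      intro g
      have h := hb g 0 0 0 0 0 0 0 0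
      simp only [LinearMap.zero_comp, LinearMap.comp_zero, map_zero, add_zero, zero_add] at h
      rw [trace_comp_comm']
      exact h
    · apply tr_nd
      intro g
      have h := hb 0 g 0 0 0 0 0 0 0
      simp only [LinearMap.zero_comp, LinearMap.comp_zero, map_zero, add_zero, zero_add] at h
      rw [trace_comp_comm']
      exact h
    · apply tr_nd
      intro g
      have h := hb 0 0 g 0 0 0 0 0 0
      simp only [LinearMap.zero_comp, LinearMap.comp_zero, map_zero, add_zero, zero_add] at h
      rw [trace_comp_comm']
      exact h
    · apply tr_nd
      intro g
      have h := hb 0 0 0 g 0 0 0 0 0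
      simpa only [LinearMap.zero_comp, LinearMap.comp_zero, map_zero, add_zero, zero_add] using h
    · apply tr_nd
      intro g
      have h := hb 0 0 0 0 g 0 0 0 0
      simpa only [LinearMap.zero_comp, LinearMap.comp_zero, map_zero, add_zero, zero_add] using h
    · apply tr_nd
      intro g
      have h := hb 0 0 0 0 0 g 0 0 0
      simpa only [LinearMap.zero_comp, LinearMap.comp_zero, map_zero, add_zero, zero_add] using h
    · apply tr_nd
      intro g
      have h := hb 0 0 0 0 0 0 g 0 0
      simpa only [LinearMap.zero_comp, LinearMap.comp_zero, map_zero, add_zero, zero_add] using h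
    · apply tr_nd
      intro g
      have h := hb 0 0 0 0 0 0 0 g 0
      simpa only [LinearMap.zero_comp, LinearMap.comp_zero, map_zero, add_zero, zero_add] using h
    · apply tr_nd
      intro g
      have h := hb 0 0 0 0 0 0 0 0 g
      simpa only [LinearMap.zero_comp, LinearMap.comp_zero, map_zero, add_zero, zero_add] using h
  · rintro ⟨h1, h2, h3, h4, h5, h6, h7, h8, h9⟩ C₁ C₂ C₃ K₁ K₂ K₃ L₁ L₂ L₃
    rw [key C₁ C₂ C₃ K₁ K₂ K₃ L₁ L₂ L₃, h1, h2, h3, h4, h5, h6, h7, h8, h9]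
    simp
end

section
/- Let V and W be finite-dimensional vector spaces over a field k, let B1, B2, B3 ∈ End(V) and I ∈ Hom(W,V). Assume B3∘B1 = B1∘B3, B3∘B2 = B2∘B3, and B3∘I = 0. If the smallest subspace of V containing the image of I and invariant under B1, B2 and B3 is V itself, then B3 = 0. -/
/-- Let `V`, `W` be finite-dimensional vector spaces over a field `k`,
`B₁, B₂, B₃ ∈ End(V)`, `I ∈ Hom(W,V)`, with `B₃∘B₁ = B₁∘B₃`, `B₃∘B₂ = B₂∘B₃` and
`B₃∘I = 0`.  If the smallest subspace of `V` containing the image of `I` and invariant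
under `B₁`, `B₂`, `B₃` is `V` itself, then `B₃ = 0`. -/
theorem B3_vanishes_on_stable_locus
    (k : Type*) [Field k]
    (V W : Type*) [AddCommGroup V] [Module k V] [FiniteDimensional k V]
    [AddCommGroup W] [Module k W] [FiniteDimensional k W]
    (B₁ B₂ B₃ : Module.End k V) (I : W →ₗ[k] V)
    (h31 : B₃ ∘ₗ B₁ = B₁ ∘ₗ B₃) (h32 : B₃ ∘ₗ B₂ = B₂ ∘ₗ B₃)
    (h3I : B₃ ∘ₗ I = 0)
    (hgen : ∀ p : Submodule k V, LinearMap.range I ≤ p →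
        (∀ x ∈ p, B₁ x ∈ p) → (∀ x ∈ p, B₂ x ∈ p) → (∀ x ∈ p, B₃ x ∈ p) → p = ⊤) :
    B₃ = 0 := by
  have hker : LinearMap.ker B₃ = ⊤ := by
    apply hgen
    · rintro _ ⟨w, rfl⟩
      simpa using congrFun (congrArg (fun f => f.toFun) h3I) w
    · intro x hx
      have := congrFun (congrArg (fun f => f.toFun) h31) x
      simp only [LinearMap.mem_ker] at hx ⊢
      rw [show (B₃ (B₁ x)) = B₁ (B₃ x) from this, hx, map_zero]
    · intro x hx
      have := congrFun (congrArg (fun f => f.toFun) h32) x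
      simp only [LinearMap.mem_ker] at hx ⊢
      rw [show (B₃ (B₂ x)) = B₂ (B₃ x) from this, hx, map_zero]
    · intro x hx
      simp only [LinearMap.mem_ker] at hx ⊢
      rw [hx, map_zero]
  ext x
  have : x ∈ LinearMap.ker B₃ := hker ▸ Submodule.mem_top
  simpa using this
end

section
/- Let V be a finite-dimensional vector space over a field k of characteristic zero, let B1, B2 ∈ End(V), and let I : k → V and J : V → k be linear maps satisfying the ADHM equation B1∘B2 − B2∘B1 + I∘J = 0. If the smallest subspace of V containing the image of I and invariant under B1 and B2 is V itself, then J = 0. -/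
open LinearMap Finset

set_option linter.unusedSectionVars false

namespace ADHMAux

variable {k : Type*} [Field k] [CharZero k]
variable {V : Type*} [AddCommGroup V] [Module k V] [FiniteDimensional k V]

/-- Word product: `wp B₁ B₂ l` is the product of `B₁`/`B₂` according to the list of booleans. -/
def wp (B₁ B₂ : Module.End k V) (l : List Bool) : Module.End k V :=
  (l.map (fun b => if b then B₂ else B₁)).prod

lemma wp_nil (B₁ B₂ : Module.End k V) : wp B₁ B₂ [] = 1 := rfl

lemma wp_cons (B₁ B₂ : Module.End k V) (x : Bool) (t : List Bool) :
    wp B₁ B₂ (x :: t) = (if x then B₂ else B₁) * wp B₁ B₂ t := by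
  simp [wp]

lemma wp_append (B₁ B₂ : Module.End k V) (s t : List Bool) :
    wp B₁ B₂ (s ++ t) = wp B₁ B₂ s * wp B₁ B₂ t := by
  simp [wp]

lemma wp_replicate_true (B₁ B₂ : Module.End k V) (m : ℕ) :
    wp B₁ B₂ (List.replicate m true) = B₂ ^ m := by
  simp [wp, List.prod_replicate]

lemma wp_replicate_false (B₁ B₂ : Module.End k V) (m : ℕ) :
    wp B₁ B₂ (List.replicate m false) = B₁ ^ m := by
  simp [wp, List.prod_replicate]

/-- The functional `x ↦ J (x (I 1))`, as a linear map. -/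
def phi (I : k →ₗ[k] V) (J : V →ₗ[k] k) : Module.End k V →ₗ[k] k where
  toFun x := J (x (I 1))
  map_add' x y := by simp
  map_smul' s x := by simp

lemma phi_apply (I : k →ₗ[k] V) (J : V →ₗ[k] k) (x : Module.End k V) :
    phi I J x = J (x (I 1)) := rfl

lemma I_apply (I : k →ₗ[k] V) (s : k) : I s = s • I 1 := by
  rw [← map_smul, smul_eq_mul, mul_one]

/-- `φ(x ⬝ (I∘J) ⬝ y) = φ(y) φ(x)`. -/
lemma phi_mul_c_mul (I : k →ₗ[k] V) (J : V →ₗ[k] k) (x y : Module.End k V) :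
    phi I J (x * (I ∘ₗ J : V →ₗ[k] V) * y) = phi I J y * phi I J x := by
  have h : (x * (I ∘ₗ J : V →ₗ[k] V) * y) (I 1) = J (y (I 1)) • x (I 1) := by
    simp only [Module.End.mul_apply, LinearMap.comp_apply]
    rw [I_apply I (J (y (I 1))), map_smul]
  simp only [phi_apply, h, map_smul, smul_eq_mul]

lemma trace_endk (f : k →ₗ[k] k) : trace k k f = f 1 := by
  have h : f = f 1 • LinearMap.id := by
    ext; simp [smul_eq_mul, mul_comm]
  rw [h, map_smul, trace_id, smul_eq_mul]
  simp

/-- `tr(x ⬝ (I∘J)) = φ(x)`. -/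
lemma trace_mul_c (I : k →ₗ[k] V) (J : V →ₗ[k] k) (x : Module.End k V) :
    trace k V (x * (I ∘ₗ J : V →ₗ[k] V)) = phi I J x := by
  have h : (x * (I ∘ₗ J : V →ₗ[k] V) : Module.End k V) = (x ∘ₗ I) ∘ₗ J := by
    ext v; simp [Module.End.mul_apply]
  rw [h, LinearMap.trace_comp_comm' J (x ∘ₗ I), trace_endk]
  rfl

/-- Commutator of a power: if `X*Y = Y*X + c` then
`X^a * Y = Y * X^a + ∑_{i<a} X^i c X^(a-1-i)`. -/
lemma pow_comm_aux (X Y c : Module.End k V) (h : X * Y = Y * X + c) (a : ℕ) :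
    X ^ a * Y = Y * X ^ a + ∑ i ∈ range a, X ^ i * c * X ^ (a - 1 - i) := by
  induction a with
  | zero => simp
  | succ a ih =>
    have sum_eq : ∑ i ∈ range (a + 1), X ^ i * c * X ^ (a + 1 - 1 - i)
        = c * X ^ a + ∑ i ∈ range a, X * (X ^ i * c * X ^ (a - 1 - i)) := by
      rw [Finset.sum_range_succ', add_comm]
      congr 1
      apply Finset.sum_congr rfl
      intro i hi
      have h1 : a + 1 - 1 - (i + 1) = a - 1 - i := by omega
      rw [h1]
      simp only [pow_succ', mul_assoc]
    have step : X ^ (a + 1) * Y = X * (X ^ a * Y) := by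
      rw [pow_succ', mul_assoc]
    rw [step, ih, mul_add, ← mul_assoc, h, add_mul, mul_assoc Y, ← pow_succ',
      Finset.mul_sum, sum_eq, add_assoc]

end ADHMAux

open ADHMAux

/-- Let `V` be a finite-dimensional vector space over a field `k` of
characteristic zero, `B₁, B₂ ∈ End(V)`, `I : k → V`, `J : V → k` linear with
`B₁∘B₂ − B₂∘B₁ + I∘J = 0`.  If the smallest subspace of `V` containing the image of `I`
and invariant under `B₁` and `B₂` is `V` itself, then `J = 0`. -/
theorem J_vanishes_for_stable_rank_one_ADHM
    (k : Type*) [Field k] [CharZero k]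
    (V : Type*) [AddCommGroup V] [Module k V] [FiniteDimensional k V]
    (B₁ B₂ : Module.End k V) (I : k →ₗ[k] V) (J : V →ₗ[k] k)
    (hADHM : B₁ ∘ₗ B₂ - B₂ ∘ₗ B₁ + I ∘ₗ J = 0)
    (hgen : ∀ p : Submodule k V, LinearMap.range I ≤ p →
        (∀ x ∈ p, B₁ x ∈ p) → (∀ x ∈ p, B₂ x ∈ p) → p = ⊤) :
    J = 0 := by
  set c : Module.End k V := (I ∘ₗ J : V →ₗ[k] V) with hcdef
  have hADHM' : B₁ * B₂ - B₂ * B₁ + c = 0 := hADHM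
  have hc : c = B₂ * B₁ - B₁ * B₂ := by
    have h := eq_neg_of_add_eq_zero_right hADHM'
    rw [h, neg_sub]
  have hc1 : B₁ * B₂ = B₂ * B₁ + (-c) := by rw [hc]; abel
  have hc2 : B₂ * B₁ = B₁ * B₂ + c := by rw [hc]; abel
  -- main claim: φ(w (I 1)) = 0 for every word w in B₁, B₂.
  have main : ∀ n (l : List Bool), l.length = n → phi I J (wp B₁ B₂ l) = 0 := by
    intro n
    induction n using Nat.strong_induction_on with
    | _ n ih =>
    -- Step S: sorting modulo shorter words
    have hS : ∀ t : List Bool, ∀ a b : ℕ, a + b + t.length = n →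
        phi I J (B₁ ^ a * B₂ ^ b * wp B₁ B₂ t)
          = phi I J (B₁ ^ (a + t.count false) * B₂ ^ (b + t.count true)) := by
      intro t
      induction t with
      | nil => intro a b _; simp [wp_nil]
      | cons x t iht =>
        intro a b hlen
        rw [wp_cons]
        cases x with
        | true =>
          rw [if_pos rfl]
          have e1 : B₁ ^ a * B₂ ^ b * (B₂ * wp B₁ B₂ t)
              = B₁ ^ a * B₂ ^ (b + 1) * wp B₁ B₂ t := by
            simp only [pow_succ, mul_assoc]
          have hlen' : a + (b + 1) + t.length = n := by
            rw [List.length_cons] at hlen; omega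
          rw [e1, iht a (b + 1) hlen']
          have e5 : a + (true :: t).count false = a + t.count false := by
            simp [List.count_cons]
          have e6 : b + (true :: t).count true = b + 1 + t.count true := by
            simp [List.count_cons]; omega
          rw [e5, e6]
        | false =>
          have key : B₂ ^ b * B₁ = B₁ * B₂ ^ b + ∑ i ∈ range b, B₂ ^ i * c * B₂ ^ (b - 1 - i) :=
            pow_comm_aux B₂ B₁ c hc2 b
          rw [if_neg Bool.false_ne_true]
          have e1 : B₁ ^ a * B₂ ^ b * (B₁ * wp B₁ B₂ t)
              = B₁ ^ a * ((B₂ ^ b * B₁) * wp B₁ B₂ t) := by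
            simp only [mul_assoc]
          rw [e1, key, add_mul, mul_add, map_add]
          -- the correction terms vanish by the induction hypothesis `ih`
          have hz : phi I J (B₁ ^ a *
              ((∑ i ∈ range b, B₂ ^ i * c * B₂ ^ (b - 1 - i)) * wp B₁ B₂ t)) = 0 := by
            rw [Finset.sum_mul, Finset.mul_sum, map_sum]
            apply Finset.sum_eq_zero
            intro i hi
            have hi' : i < b := Finset.mem_range.mp hi
            have e2 : B₁ ^ a * (B₂ ^ i * c * B₂ ^ (b - 1 - i) * wp B₁ B₂ t)
                = (B₁ ^ a * B₂ ^ i) * c * (B₂ ^ (b - 1 - i) * wp B₁ B₂ t) := by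
              simp only [mul_assoc]
            rw [e2, hcdef, phi_mul_c_mul]
            have e3 : B₂ ^ (b - 1 - i) * wp B₁ B₂ t
                = wp B₁ B₂ (List.replicate (b - 1 - i) true ++ t) := by
              rw [wp_append, wp_replicate_true]
            have hlen' : (List.replicate (b - 1 - i) true ++ t).length < n := by
              simp only [List.length_append, List.length_replicate]
              simp only [List.length_cons] at hlen
              omega
            rw [e3, ih _ hlen' _ rfl, zero_mul]
          rw [hz, add_zero]
          have e4 : B₁ ^ a * (B₁ * B₂ ^ b * wp B₁ B₂ t)
              = B₁ ^ (a + 1) * B₂ ^ b * wp B₁ B₂ t := by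
            rw [pow_succ]
            simp only [mul_assoc]
          have hlen'' : a + 1 + b + t.length = n := by
            rw [List.length_cons] at hlen; omega
          rw [e4, iht (a + 1) b hlen'']
          have e5 : a + (false :: t).count false = a + 1 + t.count false := by
            simp [List.count_cons]; omega
          have e6 : b + (false :: t).count true = b + t.count true := by
            simp [List.count_cons]
          rw [e5, e6]
    -- Step T: for the sorted word, use the trace
    have hT : ∀ a b : ℕ, a + b = n → phi I J (B₁ ^ a * B₂ ^ b) = 0 := by
      intro a b hab
      obtain ⟨w, hw⟩ : ∃ w : Module.End k V, w = B₁ ^ a * B₂ ^ b := ⟨_, rfl⟩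
      rw [← hw]
      have h1 : phi I J w = trace k V (w * c) := by
        rw [hcdef, trace_mul_c]
      have h2 : trace k V (w * c) = trace k V (w * B₂ * B₁) - trace k V (w * B₁ * B₂) := by
        rw [hc, mul_sub, map_sub, mul_assoc, mul_assoc]
      have h3 : trace k V (w * B₁ * B₂) = trace k V (B₂ * w * B₁) := by
        rw [trace_mul_comm, mul_assoc]
      have h5 : w * B₂ - B₂ * w
          = (-(∑ i ∈ range a, B₁ ^ i * c * B₁ ^ (a - 1 - i))) * B₂ ^ b := by
        have key : B₁ ^ a * B₂ = B₂ * B₁ ^ a + ∑ i ∈ range a, B₁ ^ i * (-c) * B₁ ^ (a - 1 - i) :=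
          pow_comm_aux B₁ B₂ (-c) hc1 a
        have key' : B₁ ^ a * B₂ - B₂ * B₁ ^ a
            = -(∑ i ∈ range a, B₁ ^ i * c * B₁ ^ (a - 1 - i)) := by
          rw [key, add_sub_cancel_left, ← Finset.sum_neg_distrib]
          apply Finset.sum_congr rfl
          intro i _
          rw [mul_neg, neg_mul]
        have e1 : w * B₂ = (B₁ ^ a * B₂) * B₂ ^ b := by
          rw [hw, mul_assoc, mul_assoc, ← pow_succ, ← pow_succ']
        have e2 : B₂ * w = (B₂ * B₁ ^ a) * B₂ ^ b := by rw [hw, mul_assoc]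
        rw [e1, e2, ← sub_mul, key']
      have h6 : phi I J w
          = -∑ i ∈ range a, trace k V (B₁ ^ i * c * B₁ ^ (a - 1 - i) * B₂ ^ b * B₁) := by
        rw [h1, h2, h3, ← map_sub, ← sub_mul, h5, neg_mul, neg_mul, map_neg,
          Finset.sum_mul, Finset.sum_mul, map_sum]
      have h7 : ∀ i ∈ range a,
          trace k V (B₁ ^ i * c * B₁ ^ (a - 1 - i) * B₂ ^ b * B₁) = phi I J w := by
        intro i hi
        have hi' : i < a := Finset.mem_range.mp hi
        have e1 : B₁ ^ i * c * B₁ ^ (a - 1 - i) * B₂ ^ b * B₁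
            = B₁ ^ i * (c * (B₁ ^ (a - 1 - i) * B₂ ^ b * B₁)) := by
          simp only [mul_assoc]
        rw [e1, trace_mul_comm]
        have e2 : c * (B₁ ^ (a - 1 - i) * B₂ ^ b * B₁) * B₁ ^ i
            = c * (B₁ ^ (a - 1 - i) * B₂ ^ b * B₁ ^ (i + 1)) := by
          simp only [mul_assoc, ← pow_succ']
        rw [e2, trace_mul_comm, hcdef, trace_mul_c]
        have e3 : B₁ ^ (a - 1 - i) * B₂ ^ b * B₁ ^ (i + 1)
            = B₁ ^ (a - 1 - i) * B₂ ^ b * wp B₁ B₂ (List.replicate (i + 1) false) := by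
          rw [wp_replicate_false]
        have hlen3 : (a - 1 - i) + b + (List.replicate (i + 1) false).length = n := by
          rw [List.length_replicate]; omega
        rw [e3, hS (List.replicate (i + 1) false) (a - 1 - i) b hlen3]
        have e7 : (List.replicate (i + 1) false).count false = i + 1 := by
          simp
        have e8 : (List.replicate (i + 1) false).count true = 0 := by
          rw [List.count_replicate]
          simp
        rw [e7, e8, show a - 1 - i + (i + 1) = a by omega, add_zero, hw]
      have h8 : phi I J w = -((a : k) * phi I J w) := by
        conv_lhs => rw [h6]
        rw [Finset.sum_congr rfl h7, Finset.sum_const, Finset.card_range, nsmul_eq_mul]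
      have h9 : (1 + (a : k)) * phi I J w = 0 := by
        linear_combination h8
      have hne : (1 + (a : k)) ≠ 0 := by
        have h0 : ((a + 1 : ℕ) : k) ≠ 0 := Nat.cast_ne_zero.mpr (Nat.succ_ne_zero a)
        rwa [Nat.cast_add, Nat.cast_one, add_comm] at h0
      exact (mul_eq_zero.mp h9).elim (fun h => absurd h hne) id
    intro l hl
    have hcount : ∀ m : List Bool, m.count false + m.count true = m.length := by
      intro m
      induction m with
      | nil => simp
      | cons x t iht => cases x <;> simp [List.count_cons] <;> omega
    have hcl := hcount l
    have hfin := hS l 0 0 (by omega)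
    simp only [pow_zero, one_mul, zero_add] at hfin
    rw [hfin]
    exact hT _ _ (by omega)
  -- build the invariant subspace of vectors killed by J after any word
  let p : Submodule k V :=
    { carrier := {v | ∀ l : List Bool, J (wp B₁ B₂ l v) = 0}
      add_mem' := fun hu hv l => by simp [map_add, hu l, hv l]
      zero_mem' := fun l => by simp
      smul_mem' := fun s v hv l => by simp [map_smul, hv l] }
  have hmem : ∀ v, v ∈ p ↔ ∀ l : List Bool, J (wp B₁ B₂ l v) = 0 := fun _ => Iff.rfl
  have hIp : LinearMap.range I ≤ p := by
    rintro _ ⟨s, rfl⟩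
    rw [hmem]
    intro l
    rw [I_apply I s, map_smul, map_smul]
    have h0 := main l.length l rfl
    rw [phi_apply] at h0
    rw [h0, smul_zero]
  have hB : ∀ (b : Bool), ∀ x ∈ p, (if b then B₂ else B₁) x ∈ p := by
    intro b x hx
    rw [hmem] at hx ⊢
    intro l
    have h := hx (l ++ [b])
    rwa [wp_append, wp_cons, wp_nil, mul_one, Module.End.mul_apply] at h
  have hp : p = ⊤ := hgen p hIp (fun x hx => by simpa using hB false x hx)
    (fun x hx => by simpa using hB true x hx)
  ext v
  have hv : v ∈ p := hp ▸ Submodule.mem_top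
  rw [hmem] at hv
  simpa [wp_nil] using hv []
end

section
/- Let 𝒟 and 𝒟' be pretriangulated categories and F : 𝒟 → 𝒟' an exact (triangle-preserving) functor admitting a left adjoint L and a right adjoint R, and assume that L and R are fully faithful (equivalently, the unit id → F∘L and the counit F∘R → id are isomorphisms). Let 𝒞 ⊆ 𝒟 be the full subcategory of objects E such that F(E) is a zero object. Then for every object E of 𝒟, the cone of the counit morphism L F E → E lies in 𝒞 and the cocone (fiber) of the unit morphism E → R F E lies in 𝒞, and the inclusion functor 𝒞 → 𝒟 admits both a left adjoint (sending E to the cone of L F E → E) and a right adjoint (sending E to the cocone of E → R F E). -/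
open CategoryTheory CategoryTheory.Limits CategoryTheory.Pretriangulated

section Aux

variable {D : Type*} [Category D] [Preadditive D] [HasZeroObject D] [HasShift D ℤ]
    [∀ n : ℤ, (shiftFunctor D n).Additive] [Pretriangulated D]
    {D' : Type*} [Category D'] [Preadditive D'] [HasZeroObject D'] [HasShift D' ℤ]
    [∀ n : ℤ, (shiftFunctor D' n).Additive] [Pretriangulated D']
    (F : D ⥤ D') [F.CommShift ℤ]

lemma recollement_aux_shift_isZero (C : D) (hC : IsZero (F.obj C)) (n : ℤ) :
    IsZero (F.obj ((shiftFunctor D n).obj C)) :=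
  IsZero.of_iso ((shiftFunctor D' n).map_isZero hC) ((F.commShiftIso n).app C)

lemma recollement_aux_L_zero (L : D' ⥤ D) (adjL : L ⊣ F) (C : D) (hC : IsZero (F.obj C))
    (X : D') (φ : L.obj X ⟶ C) : φ = 0 := by
  apply (adjL.homEquiv X C).injective
  exact hC.eq_of_tgt _ _

lemma recollement_aux_L_shift_zero (L : D' ⥤ D) (adjL : L ⊣ F) (C : D) (hC : IsZero (F.obj C))
    (X : D') (φ : (L.obj X)⟦(1 : ℤ)⟧ ⟶ C) : φ = 0 := by
  apply ((shiftEquiv D (1 : ℤ)).toAdjunction.homEquiv (L.obj X) C).injective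
  apply (adjL.homEquiv X _).injective
  exact (recollement_aux_shift_isZero F C hC (-1)).eq_of_tgt _ _

lemma recollement_aux_R_zero (R : D' ⥤ D) (adjR : F ⊣ R) (C : D) (hC : IsZero (F.obj C))
    (X : D') (φ : C ⟶ R.obj X) : φ = 0 := by
  apply (adjR.homEquiv C X).symm.injective
  exact hC.eq_of_src _ _

lemma recollement_aux_R_shift_zero (R : D' ⥤ D) (adjR : F ⊣ R) (C : D) (hC : IsZero (F.obj C))
    (X : D') (φ : C ⟶ (R.obj X)⟦(-1 : ℤ)⟧) : φ = 0 := by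
  apply ((shiftEquiv D (1 : ℤ)).toAdjunction.homEquiv C (R.obj X)).symm.injective
  apply (adjR.homEquiv _ X).symm.injective
  exact (recollement_aux_shift_isZero F C hC 1).eq_of_src _ _

end Aux

/-- Let `F : D ⥤ D'` be an exact (triangulated) functor of
pretriangulated categories admitting a fully faithful left adjoint `L` and a fully
faithful right adjoint `R`, and let `𝒞 ⊆ D` be the full subcategory of objects `E` with
`F(E) ≅ 0`.  Then for every `E` the cone of the counit `L F E ⟶ E` lies in `𝒞`, the
cocone (fiber) of the unit `E ⟶ R F E` lies in `𝒞`, and the inclusion `𝒞 ⥤ D` admits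
both a left adjoint and a right adjoint. -/
theorem recollement_kernel_admits_adjoints
    {D : Type*} [Category D] [Preadditive D] [HasZeroObject D] [HasShift D ℤ]
    [∀ n : ℤ, (shiftFunctor D n).Additive] [Pretriangulated D]
    {D' : Type*} [Category D'] [Preadditive D'] [HasZeroObject D'] [HasShift D' ℤ]
    [∀ n : ℤ, (shiftFunctor D' n).Additive] [Pretriangulated D']
    (F : D ⥤ D') [F.CommShift ℤ] [F.IsTriangulated]
    (L R : D' ⥤ D) (adjL : L ⊣ F) (adjR : F ⊣ R)
    [L.Full] [L.Faithful] [R.Full] [R.Faithful] :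
    (∀ (E Z : D) (g : E ⟶ Z) (h : Z ⟶ (L.obj (F.obj E))⟦(1 : ℤ)⟧),
        Triangle.mk (adjL.counit.app E) g h ∈ (distTriang D) → IsZero (F.obj Z)) ∧
    (∀ (E Z : D) (f : Z ⟶ E) (h : R.obj (F.obj E) ⟶ Z⟦(1 : ℤ)⟧),
        Triangle.mk f (adjR.unit.app E) h ∈ (distTriang D) → IsZero (F.obj Z)) ∧
    (ObjectProperty.ι (fun E : D => IsZero (F.obj E) : ObjectProperty D)).IsRightAdjoint ∧
    (ObjectProperty.ι (fun E : D => IsZero (F.obj E) : ObjectProperty D)).IsLeftAdjoint := by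
  have key1 : ∀ (E Z : D) (g : E ⟶ Z) (h : Z ⟶ (L.obj (F.obj E))⟦(1 : ℤ)⟧),
      Triangle.mk (adjL.counit.app E) g h ∈ (distTriang D) → IsZero (F.obj Z) := by
    intro E Z g h hT
    haveI h0 : IsIso (adjL.unit.app (F.obj E) ≫ F.map (adjL.counit.app E)) := by
      rw [adjL.right_triangle_components]; exact IsIso.id _
    have h1 : IsIso (F.map (adjL.counit.app E)) :=
      IsIso.of_isIso_comp_left (adjL.unit.app (F.obj E)) (F.map (adjL.counit.app E))
    exact Triangle.isZero₃_of_isIso₁ _ (F.map_distinguished _ hT) h1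
  have key2 : ∀ (E Z : D) (f : Z ⟶ E) (h : R.obj (F.obj E) ⟶ Z⟦(1 : ℤ)⟧),
      Triangle.mk f (adjR.unit.app E) h ∈ (distTriang D) → IsZero (F.obj Z) := by
    intro E Z f h hT
    haveI h0 : IsIso (F.map (adjR.unit.app E) ≫ adjR.counit.app (F.obj E)) := by
      rw [show F.map (adjR.unit.app E) ≫ adjR.counit.app (F.obj E) = 𝟙 _ from adjR.left_triangle_components E]; exact IsIso.id _
    have h1 : IsIso (F.map (adjR.unit.app E)) :=
      IsIso.of_isIso_comp_right (F.map (adjR.unit.app E)) (adjR.counit.app (F.obj E))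
    exact Triangle.isZero₁_of_isIso₂ _ (F.map_distinguished _ hT) h1
  refine ⟨key1, key2, ?_, ?_⟩
  · -- left adjoint of the inclusion exists, i.e. the inclusion is a right adjoint
    have : ∀ E : D,
        HasInitial (StructuredArrow E (ObjectProperty.ι (fun E : D => IsZero (F.obj E) : ObjectProperty D))) := by
      intro E
      obtain ⟨Z, g, h, hT⟩ := distinguished_cocone_triangle (adjL.counit.app E)
      have hZ : IsZero (F.obj Z) := key1 E Z g h hT
      have cancel : ∀ (C : D), IsZero (F.obj C) → ∀ (u u' : Z ⟶ C),
          g ≫ u = g ≫ u' → u = u' := by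
        intro C hC u u' huu
        obtain ⟨k, hk⟩ := Triangle.yoneda_exact₃ _ hT (u - u')
          (by dsimp; erw [Preadditive.comp_sub, huu, sub_self])
        erw [recollement_aux_L_shift_zero F L adjL C hC _ k, comp_zero] at hk
        exact sub_eq_zero.1 hk
      set X₀ : StructuredArrow E (ObjectProperty.ι (fun E : D => IsZero (F.obj E) : ObjectProperty D)) :=
        StructuredArrow.mk
          (Y := (⟨Z, hZ⟩ : ObjectProperty.FullSubcategory (fun E : D => IsZero (F.obj E) : ObjectProperty D))) g with hX₀
      haveI : ∀ A, Nonempty (X₀ ⟶ A) := by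
        intro A
        obtain ⟨u, hu⟩ := Triangle.yoneda_exact₂ _ hT A.hom
          (recollement_aux_L_zero F L adjL _ A.right.2 _ _)
        exact ⟨StructuredArrow.homMk (ObjectProperty.homMk (P := _) u) hu.symm⟩
      haveI : ∀ A, Subsingleton (X₀ ⟶ A) := by
        intro A
        constructor
        intro m m'
        have w1 := StructuredArrow.w m
        have w2 := StructuredArrow.w m'
        ext
        exact cancel _ A.right.2 m.right.hom m'.right.hom (w1.trans w2.symm)
      exact hasInitial_of_unique X₀
    exact isRightAdjointOfStructuredArrowInitials _
  · -- right adjoint of the inclusion exists, i.e. the inclusion is a left adjoint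
    have : ∀ E : D,
        HasTerminal (CostructuredArrow (ObjectProperty.ι (fun E : D => IsZero (F.obj E) : ObjectProperty D)) E) := by
      intro E
      obtain ⟨Z, f, h, hT⟩ := distinguished_cocone_triangle₁ (adjR.unit.app E)
      have hZ : IsZero (F.obj Z) := key2 E Z f h hT
      have cancel : ∀ (C : D), IsZero (F.obj C) → ∀ (u u' : C ⟶ Z),
          u ≫ f = u' ≫ f → u = u' := by
        intro C hC u u' huu
        obtain ⟨k, hk⟩ := Triangle.coyoneda_exact₂ _ (inv_rot_of_distTriang _ hT) (u - u')
          (by dsimp; erw [Preadditive.sub_comp, huu, sub_self])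
        erw [recollement_aux_R_shift_zero F R adjR C hC _ k, zero_comp] at hk
        exact sub_eq_zero.1 hk
      set X₀ : CostructuredArrow (ObjectProperty.ι (fun E : D => IsZero (F.obj E) : ObjectProperty D)) E :=
        CostructuredArrow.mk
          (Y := (⟨Z, hZ⟩ : ObjectProperty.FullSubcategory (fun E : D => IsZero (F.obj E) : ObjectProperty D))) f with hX₀
      haveI : ∀ A, Nonempty (A ⟶ X₀) := by
        intro A
        obtain ⟨u, hu⟩ := Triangle.coyoneda_exact₂ _ hT A.hom
          (recollement_aux_R_zero F R adjR _ A.left.2 _ _)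
        exact ⟨CostructuredArrow.homMk (ObjectProperty.homMk (P := _) u) hu.symm⟩
      haveI : ∀ A, Subsingleton (A ⟶ X₀) := by
        intro A
        constructor
        intro m m'
        have w1 := CostructuredArrow.w m
        have w2 := CostructuredArrow.w m'
        ext
        exact cancel _ A.left.2 m.left.hom m'.left.hom (w1.trans w2.symm)
      exact hasTerminal_of_unique X₀
    exact isLeftAdjoint_of_costructuredArrowTerminals _
end

section
/- In the polynomial ring ℤ[X], for all natural numbers d and r with d ≤ r, the congruence ∏_{j=0}^{r−1} ∏_{k=1}^{d} (1 + X^{j+k})² · ∏_{n=1}^{d} (1 − X^n)^{2n} ≡ ∏_{n=1}^{d} (1 + X^n)^{2n} · ∏_{j=0}^{r−1} ∏_{k=1}^{d} (1 − X^{j+k})² holds modulo the ideal generated by X^{d+1}. -/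
open Polynomial Finset

/-- Reindexing lemma: a double product over `j < r`, `1 ≤ k ≤ d` of `g (j+k)`,
where `g` is `1` above `d`, collapses to `∏ n, g n ^ n`. -/
lemma double_prod_collapse {M : Type*} [CommMonoid M] (d r : ℕ) (h : d ≤ r)
    (g : ℕ → M) (hg : ∀ m, d < m → g m = 1) :
    ∏ j ∈ range r, ∏ k ∈ Icc 1 d, g (j + k) = ∏ n ∈ Icc 1 d, g n ^ n := by
  rw [← Finset.prod_product']
  rw [← Finset.prod_filter_mul_prod_filter_not ((range r) ×ˢ (Icc 1 d))
      (fun p => p.1 + p.2 ≤ d)]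
  have h2 : ∏ p ∈ ((range r) ×ˢ (Icc 1 d)).filter (fun p => ¬ p.1 + p.2 ≤ d),
      g (p.1 + p.2) = 1 := by
    apply Finset.prod_eq_one
    intro p hp
    simp only [Finset.mem_filter, not_le] at hp
    exact hg _ hp.2
  rw [h2, mul_one]
  have h3 : ∏ n ∈ Icc 1 d, g n ^ n =
      ∏ p ∈ (Icc 1 d).sigma (fun n => range n), g p.1 := by
    rw [Finset.prod_sigma]
    simp [Finset.prod_const]
  rw [h3]
  apply Finset.prod_nbij' (fun p => ⟨p.1 + p.2, p.1⟩) (fun q => (q.2, q.1 - q.2))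
  · intro p hp
    simp only [Finset.mem_filter, Finset.mem_product, Finset.mem_range,
      Finset.mem_Icc, Finset.mem_sigma] at hp ⊢
    omega
  · intro q hq
    simp only [Finset.mem_sigma, Finset.mem_range, Finset.mem_Icc,
      Finset.mem_filter, Finset.mem_product] at hq ⊢
    omega
  · intro p hp
    obtain ⟨j, k⟩ := p
    simp only [Finset.mem_filter, Finset.mem_product, Finset.mem_range,
      Finset.mem_Icc] at hp
    simp
  · intro q hq
    obtain ⟨n, j⟩ := q
    simp only [Finset.mem_sigma, Finset.mem_range, Finset.mem_Icc] at hq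
    have hnj : j + (n - j) = n := by omega
    simp only [hnj]
  · intro p hp; rfl

/-- In `ℤ[X]`, for all `d ≤ r`,
`∏_{j=0}^{r−1} ∏_{k=1}^{d} (1 + X^{j+k})² · ∏_{n=1}^{d} (1 − X^n)^{2n} ≡
 ∏_{n=1}^{d} (1 + X^n)^{2n} · ∏_{j=0}^{r−1} ∏_{k=1}^{d} (1 − X^{j+k})²`
modulo the ideal generated by `X^{d+1}`.  (Stabilization of the vacuum characters of the
rectangular `W`-superalgebras `W(gl_{r|r})` to the `N=2` super-`W_{1+∞}` character.) -/
theorem super_macmahon_character_stabilization (d r : ℕ) (h : d ≤ r) :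
    ((∏ j ∈ range r, ∏ k ∈ Icc 1 d, (1 + (X : ℤ[X]) ^ (j + k)) ^ 2) *
        ∏ n ∈ Icc 1 d, (1 - (X : ℤ[X]) ^ n) ^ (2 * n)) ≡
      ((∏ n ∈ Icc 1 d, (1 + (X : ℤ[X]) ^ n) ^ (2 * n)) *
        ∏ j ∈ range r, ∏ k ∈ Icc 1 d, (1 - (X : ℤ[X]) ^ (j + k)) ^ 2)
      [SMOD (Ideal.span {(X : ℤ[X]) ^ (d + 1)} : Ideal ℤ[X])] := by
  set I : Ideal ℤ[X] := Ideal.span {(X : ℤ[X]) ^ (d + 1)}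
  rw [SModEq.sub_mem, ← Ideal.Quotient.eq]
  set φ := Ideal.Quotient.mk I
  have hX : ∀ m : ℕ, d < m → φ ((X : ℤ[X]) ^ m) = 0 := by
    intro m hm
    apply Ideal.Quotient.eq_zero_iff_mem.mpr
    have : (X : ℤ[X]) ^ m = (X : ℤ[X]) ^ (d + 1) * X ^ (m - (d + 1)) := by
      rw [← pow_add]; congr 1; omega
    rw [this]
    exact Ideal.mul_mem_right _ _ (Ideal.subset_span rfl)
  have key : ∀ c : ℤ[X],
      φ (∏ j ∈ range r, ∏ k ∈ Icc 1 d, (1 + c * (X : ℤ[X]) ^ (j + k)) ^ 2) =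
      φ (∏ n ∈ Icc 1 d, (1 + c * (X : ℤ[X]) ^ n) ^ (2 * n)) := by
    intro c
    simp only [map_prod, map_pow, map_add, map_mul, map_one]
    calc ∏ j ∈ range r, ∏ k ∈ Icc 1 d, (1 + φ c * φ ((X:ℤ[X]) ^ (j + k))) ^ 2
        = ∏ n ∈ Icc 1 d, ((1 + φ c * φ ((X:ℤ[X]) ^ n)) ^ 2) ^ n := by
          exact double_prod_collapse d r h (fun m => (1 + φ c * φ ((X:ℤ[X]) ^ m)) ^ 2)
            (fun m hm => by simp only [hX m hm, mul_zero, add_zero, one_pow])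
      _ = ∏ n ∈ Icc 1 d, (1 + φ c * φ ((X:ℤ[X]) ^ n)) ^ (2 * n) := by
          refine Finset.prod_congr rfl fun n _ => ?_
          rw [← pow_mul]
  have k1 := key 1
  have k2 := key (-1)
  simp only [one_mul] at k1
  have e2 : ∀ m : ℕ, (1 + (-1 : ℤ[X]) * X ^ m) = 1 - X ^ m := fun m => by ring
  simp only [e2] at k2
  simp only [map_mul, k1, k2]
end
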